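/- Let U₁,...,U_n ⊆ ℝ^d be slabs of the form U_i = {β : y_i − r ≤ x_iᵀβ ≤ y_i + r} (each bounded by two parallel hyperplanes), and let f(β) = Σ_{i=1}^n 1{β ∈ U_i}. Then f attains its maximum over ℝ^d at some point β that is the intersection of d of the 2n bounding hyperplanes {x_iᵀβ = y_i ± r} (whenever such an intersection point is well-defined and the maximum of f exceeds the value attained at infinity); more precisely, since f is upper semicontinuous and piecewise constant on the cells of the hyperplane arrangement, sup_β f(β) is attained at a vertex of the arrangement or on an unbounded cell, and in the generic case the maximizer can be taken among the at most C(2n, d) vertices. -/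

import Mathlib

open MeasureTheory

private lemma slab_indep_insert {n d : ℕ} (x : Fin n → EuclideanSpace ℝ (Fin d))
    (E : Finset (Fin n)) (i₀ : Fin n) (hi₀ : i₀ ∉ E)
    (v : EuclideanSpace ℝ (Fin d))
    (hv : ∀ i ∈ E, (inner ℝ (x i) v : ℝ) = 0)
    (hc : (inner ℝ (x i₀) v : ℝ) ≠ 0)
    (h : LinearIndependent ℝ (fun i : E => x i)) :
    LinearIndependent ℝ (fun i : (insert i₀ E : Finset (Fin n)) => x i) := by
  have hi₀' : i₀ ∉ (E : Set (Fin n)) := by simpa using hi₀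
  have key : LinearIndependent ℝ (fun i : (insert i₀ (E : Set (Fin n)) : Set (Fin n)) => x i) := by
    change LinearIndepOn ℝ x (insert i₀ (E : Set (Fin n)))
    rw [linearIndepOn_insert hi₀']
    refine ⟨h, ?_⟩
    intro hmem
    have hker : Submodule.span ℝ (x '' (E : Set (Fin n))) ≤ LinearMap.ker ((innerSL ℝ v : EuclideanSpace ℝ (Fin d) →L[ℝ] ℝ) : EuclideanSpace ℝ (Fin d) →ₗ[ℝ] ℝ) := by
      rw [Submodule.span_le]
      rintro _ ⟨i, hi, rfl⟩
      simp only [SetLike.mem_coe, LinearMap.mem_ker, ContinuousLinearMap.coe_coe]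
      rw [show ((innerSL ℝ v) (x i) : ℝ) = inner ℝ v (x i) from rfl, real_inner_comm]; exact hv i (by simpa using hi)
    have := hker hmem
    simp only [LinearMap.mem_ker, ContinuousLinearMap.coe_coe] at this
    rw [show ((innerSL ℝ v) (x i₀) : ℝ) = inner ℝ v (x i₀) from rfl, real_inner_comm] at this
    exact hc this
  have hset : (insert i₀ (E : Set (Fin n))) = ((insert i₀ E : Finset (Fin n)) : Set (Fin n)) := by
    simp
  rw [hset] at key
  exact key

private lemma slab_key {n d : ℕ}
    (x : Fin n → EuclideanSpace ℝ (Fin d)) (y : Fin n → ℝ) {r : ℝ} (hr : 0 < r)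
    (f : EuclideanSpace ℝ (Fin d) → ℕ)
    (hf : ∀ β, f β = (Finset.univ.filter (fun i : Fin n => |y i - (inner ℝ (x i) β : ℝ)| ≤ r)).card) :
    ∀ (k : ℕ) (E : Finset (Fin n)) (s : Fin n → Bool) (β : EuclideanSpace ℝ (Fin d)),
      d ≤ E.card + k →
      (∀ γ, f γ ≤ f β) →
      (∀ i ∈ E, (inner ℝ (x i) β : ℝ) = y i + (if s i then r else -r)) →
      LinearIndependent ℝ (fun i : E => x i) →
      ∃ β₀, (∀ γ, f γ ≤ f β₀) ∧
        ((∃ (s : Fin n → Bool) (T : Finset (Fin n)), T.card = d ∧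
            LinearIndependent ℝ (fun i : T => x i) ∧
            ∀ i ∈ T, (inner ℝ (x i) β₀ : ℝ) = y i + (if s i then r else -r))
          ∨ (∀ M : ℝ, ∃ β', M ≤ ‖β'‖ ∧ f β₀ ≤ f β')) := by
  intro k
  induction k with
  | zero =>
    intro E s β hcard hmax heq hind
    refine ⟨β, hmax, Or.inl ⟨s, E, ?_, hind, heq⟩⟩
    have h1 : E.card ≤ d := by
      have := hind.fintype_card_le_finrank
      simpa [finrank_euclideanSpace_fin] using this
    omega
  | succ k ih =>
    intro E s β hcard hmax heq hind
    classical
    by_cases hEd : d ≤ E.card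
    · refine ⟨β, hmax, Or.inl ⟨s, E, ?_, hind, heq⟩⟩
      have h1 : E.card ≤ d := by
        have := hind.fintype_card_le_finrank
        simpa [finrank_euclideanSpace_fin] using this
      omega
    -- E.card < d : find v ⊥ span
    push_neg at hEd
    set K : Submodule ℝ (EuclideanSpace ℝ (Fin d)) :=
      Submodule.span ℝ ((E.image x : Finset (EuclideanSpace ℝ (Fin d))) : Set (EuclideanSpace ℝ (Fin d))) with hK
    have hKne : K ≠ ⊤ := by
      intro htop
      have h1 : Module.finrank ℝ K ≤ (E.image x).card := finrank_span_finset_le_card _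
      have h2 : (E.image x).card ≤ E.card := Finset.card_image_le
      have h3 : Module.finrank ℝ K = d := by
        rw [htop]
        simpa using (finrank_euclideanSpace_fin (n := d))
      omega
    have hKbot : Kᗮ ≠ ⊥ := by
      intro hbot
      exact hKne (Submodule.orthogonal_eq_bot_iff.mp hbot)
    obtain ⟨v, hvK, hv0⟩ := Submodule.exists_mem_ne_zero_of_ne_bot hKbot
    have hvE : ∀ i ∈ E, (inner ℝ (x i) v : ℝ) = 0 := by
      intro i hi
      exact hvK (x i) (Submodule.subset_span (by simp [Finset.mem_image]; exact ⟨i, hi, rfl⟩))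
    -- active set
    set A : Finset (Fin n) := Finset.univ.filter (fun i => |y i - (inner ℝ (x i) β : ℝ)| ≤ r) with hA
    set B : Finset (Fin n) := A.filter (fun i => (inner ℝ (x i) v : ℝ) ≠ 0) with hB
    by_cases hBne : B.Nonempty
    · -- descent step
      set g : Fin n → ℝ := fun i =>
        (y i + (if 0 < (inner ℝ (x i) v : ℝ) then r else -r) - (inner ℝ (x i) β : ℝ)) / (inner ℝ (x i) v : ℝ) with hg
      obtain ⟨i₀, hi₀B, hi₀min⟩ := B.exists_min_image g hBne
      have hi₀A : i₀ ∈ A := (Finset.mem_filter.mp hi₀B).1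
      have hc0 : (inner ℝ (x i₀) v : ℝ) ≠ 0 := (Finset.mem_filter.mp hi₀B).2
      set t : ℝ := g i₀ with ht
      -- basic facts about exit times
      have habs : ∀ i ∈ A, y i - r ≤ (inner ℝ (x i) β : ℝ) ∧ (inner ℝ (x i) β : ℝ) ≤ y i + r := by
        intro i hi
        have := (Finset.mem_filter.mp hi).2
        constructor <;> [linarith [abs_le.mp this |>.2]; linarith [abs_le.mp this |>.1]]
      have hgnn : ∀ i ∈ B, 0 ≤ g i := by
        intro i hi
        have hiA : i ∈ A := (Finset.mem_filter.mp hi).1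
        have hci : (inner ℝ (x i) v : ℝ) ≠ 0 := (Finset.mem_filter.mp hi).2
        obtain ⟨hlo, hhi⟩ := habs i hiA
        rcases lt_or_gt_of_ne hci with hneg | hpos
        · rw [hg]; simp only [if_neg (not_lt.mpr hneg.le)]
          rw [div_nonneg_iff]; right; constructor <;> linarith
        · rw [hg]; simp only [if_pos hpos]
          apply div_nonneg <;> linarith
      have htnn : 0 ≤ t := hgnn i₀ hi₀B
      have hgc : ∀ i : Fin n, (inner ℝ (x i) v : ℝ) ≠ 0 →
          g i * (inner ℝ (x i) v : ℝ) =
            y i + (if 0 < (inner ℝ (x i) v : ℝ) then r else -r) - (inner ℝ (x i) β : ℝ) := by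
        intro i hci
        rw [hg]
        exact div_mul_cancel₀ _ hci
      set β' : EuclideanSpace ℝ (Fin d) := β + t • v with hβ'
      have hinner : ∀ i : Fin n, (inner ℝ (x i) β' : ℝ) = (inner ℝ (x i) β : ℝ) + t * (inner ℝ (x i) v : ℝ) := by
        intro i
        rw [hβ', inner_add_right, real_inner_smul_right]
      -- β' stays in all slabs of A
      have hstay : ∀ i ∈ A, |y i - (inner ℝ (x i) β' : ℝ)| ≤ r := by
        intro i hi
        obtain ⟨hlo, hhi⟩ := habs i hi
        by_cases hci : (inner ℝ (x i) v : ℝ) = 0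
        · rw [hinner, hci]
          simpa using (Finset.mem_filter.mp hi).2
        · have hiB : i ∈ B := Finset.mem_filter.mpr ⟨hi, hci⟩
          have hti : t ≤ g i := hi₀min i hiB
          rw [hinner, abs_le]
          rcases lt_or_gt_of_ne hci with hneg | hpos
          · have hthis := hgc i hci
            rw [if_neg (not_lt.mpr hneg.le)] at hthis
            have h1 : t * (inner ℝ (x i) v : ℝ) ≥ g i * (inner ℝ (x i) v : ℝ) :=
              mul_le_mul_of_nonpos_right hti hneg.le
            have h2 : t * (inner ℝ (x i) v : ℝ) ≤ 0 := mul_nonpos_of_nonneg_of_nonpos htnn hneg.le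
            constructor <;> [linarith [hthis ▸ h1]; linarith]
          · have hthis := hgc i hci
            rw [if_pos hpos] at hthis
            have h1 : t * (inner ℝ (x i) v : ℝ) ≤ g i * (inner ℝ (x i) v : ℝ) :=
              mul_le_mul_of_nonneg_right hti hpos.le
            have h2 : 0 ≤ t * (inner ℝ (x i) v : ℝ) := mul_nonneg htnn hpos.le
            constructor <;> [linarith; linarith [hthis ▸ h1]]
      -- hence β' is a maximizer
      have hmax' : ∀ γ, f γ ≤ f β' := by
        intro γ
        refine le_trans (hmax γ) ?_
        rw [hf β, hf β']
        apply Finset.card_le_card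
        intro i hi
        rw [Finset.mem_filter] at hi ⊢
        exact ⟨hi.1, hstay i (by rw [hA, Finset.mem_filter]; exact ⟨hi.1, hi.2⟩)⟩
      -- equalities at β'
      have hi₀E : i₀ ∉ E := by
        intro hmem
        exact hc0 (hvE i₀ hmem)
      set s' : Fin n → Bool := Function.update s i₀ (decide (0 < (inner ℝ (x i₀) v : ℝ))) with hs'
      have heq' : ∀ i ∈ (insert i₀ E : Finset (Fin n)),
          (inner ℝ (x i) β' : ℝ) = y i + (if s' i then r else -r) := by
        intro i hi
        rcases Finset.mem_insert.mp hi with rfl | hiE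
        · rw [hinner, hs', Function.update_self]
          have hthis : t * (inner ℝ (x i) v : ℝ) =
              y i + (if 0 < (inner ℝ (x i) v : ℝ) then r else -r) - (inner ℝ (x i) β : ℝ) := by
            rw [ht]; exact hgc i hc0
          rw [hthis]
          by_cases hp : 0 < (inner ℝ (x i) v : ℝ) <;> simp [hp] <;> ring
        · have hne : i ≠ i₀ := by rintro rfl; exact hi₀E hiE
          rw [hinner, hvE i hiE, hs', Function.update_of_ne hne]
          rw [heq i hiE]; ring
      have hind' : LinearIndependent ℝ (fun i : (insert i₀ E : Finset (Fin n)) => x i) :=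
        slab_indep_insert x E i₀ hi₀E v hvE hc0 hind
      have hcard' : d ≤ (insert i₀ E).card + k := by
        rw [Finset.card_insert_of_notMem hi₀E]; omega
      exact ih (insert i₀ E) s' β' hcard' hmax' heq' hind'
    · -- B empty: unbounded direction
      refine ⟨β, hmax, Or.inr ?_⟩
      intro M
      have hvnorm : 0 < ‖v‖ := norm_pos_iff.mpr hv0
      set t : ℝ := (|M| + ‖β‖) / ‖v‖ with ht
      have htnn : 0 ≤ t := div_nonneg (by positivity) hvnorm.le
      refine ⟨β + t • v, ?_, ?_⟩
      · have h1 : ‖t • v‖ ≤ ‖β + t • v‖ + ‖β‖ := by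
          have := norm_sub_le (β + t • v) β
          simpa using this
        have h2 : ‖t • v‖ = t * ‖v‖ := by
          rw [norm_smul, Real.norm_eq_abs, abs_of_nonneg htnn]
        have h3 : t * ‖v‖ = |M| + ‖β‖ := by
          rw [ht]; field_simp
        have : |M| + ‖β‖ ≤ ‖β + t • v‖ + ‖β‖ := by rw [← h3, ← h2]; exact h1
        linarith [le_abs_self M]
      · rw [hf β, hf (β + t • v)]
        apply Finset.card_le_card
        intro i hi
        rw [Finset.mem_filter] at hi ⊢
        have hiA : i ∈ A := by rw [hA, Finset.mem_filter]; exact ⟨hi.1, hi.2⟩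
        have hci : (inner ℝ (x i) v : ℝ) = 0 := by
          by_contra hne
          exact hBne ⟨i, Finset.mem_filter.mpr ⟨hiA, hne⟩⟩
        refine ⟨hi.1, ?_⟩
        rw [inner_add_right, real_inner_smul_right, hci]
        simpa using hi.2


/-- Maximizing the number of slabs containing a point: the count function
`f(β) = #{i : |y_i − ⟪x_i, β⟫| ≤ r}` attains its maximum either at a vertex of
the hyperplane arrangement (a point where `d` of the bounding hyperplanes
`⟪x_i, β⟫ = y_i ± r` with linearly independent normals meet) or the maximal
value is attained at points of arbitrarily large norm (an unbounded cell). -/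
theorem modal_regression_attained_at_vertex
    (n d : ℕ) (hd : 0 < d)
    (x : Fin n → EuclideanSpace ℝ (Fin d)) (y : Fin n → ℝ)
    (r : ℝ) (hr : 0 < r)
    (f : EuclideanSpace ℝ (Fin d) → ℕ)
    (hf : ∀ β, f β =
      (Finset.univ.filter (fun i : Fin n => |y i - (inner ℝ (x i) β : ℝ)| ≤ r)).card) :
    ∃ β₀ : EuclideanSpace ℝ (Fin d),
      (∀ β, f β ≤ f β₀) ∧
      ((∃ (s : Fin n → Bool) (T : Finset (Fin n)), T.card = d ∧
          LinearIndependent ℝ (fun i : T => x i) ∧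
          ∀ i ∈ T, (inner ℝ (x i) β₀ : ℝ) = y i + (if s i then r else -r))
        ∨ (∀ M : ℝ, ∃ β, M ≤ ‖β‖ ∧ f β₀ ≤ f β)) := by
  -- existence of a maximizer
  have hbdd : ∀ β, f β ≤ n := by
    intro β
    rw [hf β]
    exact le_trans (Finset.card_filter_le _ _) (by simp)
  have hne : (Set.range f).Nonempty := ⟨f 0, ⟨0, rfl⟩⟩
  have hBdd : BddAbove (Set.range f) := ⟨n, by rintro _ ⟨β, rfl⟩; exact hbdd β⟩
  obtain ⟨β₁, hβ₁⟩ := Nat.sSup_mem hne hBdd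
  have hmax : ∀ γ, f γ ≤ f β₁ := by
    intro γ
    rw [hβ₁]
    exact le_csSup hBdd ⟨γ, rfl⟩
  have hind : LinearIndependent ℝ (fun i : (∅ : Finset (Fin n)) => x i) :=
    linearIndependent_empty_type
  have heq : ∀ i ∈ (∅ : Finset (Fin n)),
      (inner ℝ (x i) β₁ : ℝ) = y i + (if (fun _ => false) i then r else -r) := by
    intro i hi; exact absurd hi (Finset.notMem_empty i)
  obtain ⟨β₀, h1, h2⟩ := slab_key x y hr f hf d ∅ (fun _ => false) β₁ (by simp) hmax heq hind
  exact ⟨β₀, h1, h2⟩
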